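/- arXiv:0705.2784 — 2 statements merged into one kernel-verified Lean document; each statement's English description precedes it below -/
import Mathlib

section
/- Let ρ and σ be n×n positive semidefinite complex matrices with trace 1, and let Π be an n×n complex matrix that is Hermitian and idempotent (Πᴴ = Π and Π² = Π) and satisfies Π·ρ = ρ. Then F(ρ, σ)² ≤ tr(Π·σ). -/
open Matrix BigOperators
open scoped ComplexOrder

/-- The positive semidefinite square root of a matrix (zero if the matrix is
not positive semidefinite). -/
noncomputable def msqrt {n : Type*} [Fintype n] [DecidableEq n]
    (A : Matrix n n ℂ) : Matrix n n ℂ :=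
  letI := Classical.dec A.PosSemidef
  if h : A.PosSemidef then
    (h.1.eigenvectorUnitary : Matrix n n ℂ) * diagonal ((↑) ∘ (√·) ∘ h.1.eigenvalues) *
      (star h.1.eigenvectorUnitary : Matrix n n ℂ)
  else 0

/-- The fidelity `F(ρ,σ) = tr √(√ρ σ √ρ)` of two (positive semidefinite) matrices. -/
noncomputable def fidelity {n : Type*} [Fintype n] [DecidableEq n]
    (ρ σ : Matrix n n ℂ) : ℝ :=
  ((msqrt (msqrt ρ * σ * msqrt ρ)).trace).re

/-- The hiding state `ρ_f` of a function `f : X → Y`: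
`(ρ_f)_{x,x'} = 1/|X|` if `f x = f x'` and `0` otherwise. -/
noncomputable def hidingState {X Y : Type*} [Fintype X] [DecidableEq Y]
    (f : X → Y) : Matrix X X ℂ :=
  Matrix.of fun x x' => if f x = f x' then (1 : ℂ) / (Fintype.card X) else 0

section helpers
variable {n : Type*} [Fintype n] [DecidableEq n]
set_option linter.unusedSectionVars false

noncomputable def Matrix.PosSemidef.sqrt {A : Matrix n n ℂ} (hA : A.PosSemidef) : Matrix n n ℂ :=
  (hA.1.eigenvectorUnitary : Matrix n n ℂ) * diagonal ((↑) ∘ (√·) ∘ hA.1.eigenvalues) *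
    (star hA.1.eigenvectorUnitary : Matrix n n ℂ)

lemma Matrix.PosSemidef.sqrt_mul_self {A : Matrix n n ℂ} (hA : A.PosSemidef) :
    hA.sqrt * hA.sqrt = A := by
  have hu : star (hA.1.eigenvectorUnitary : Matrix n n ℂ) *
      (hA.1.eigenvectorUnitary : Matrix n n ℂ) = 1 := Unitary.coe_star_mul_self _
  conv_rhs => rw [hA.1.spectral_theorem, Unitary.conjStarAlgAut_apply]
  simp only [Matrix.PosSemidef.sqrt]
  rw [show ∀ a b c d e f : Matrix n n ℂ, a * b * c * (d * e * f) = a * (b * (c * d) * e) * f from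
    by intros; simp only [Matrix.mul_assoc], hu, Matrix.mul_one, diagonal_mul_diagonal]
  congr 3
  funext i
  simp [← Complex.ofReal_mul, Real.mul_self_sqrt (hA.eigenvalues_nonneg i)]

lemma Matrix.PosSemidef.posSemidef_sqrt {A : Matrix n n ℂ} (hA : A.PosSemidef) :
    hA.sqrt.PosSemidef := by
  have h : (diagonal ((↑) ∘ (√·) ∘ hA.1.eigenvalues) : Matrix n n ℂ).PosSemidef :=
    PosSemidef.diagonal (fun i => by simp [Real.sqrt_nonneg])
  exact h.mul_mul_conjTranspose_same _

lemma diag_psd_nonneg' {M : Matrix n n ℂ} (hM : M.PosSemidef) (i : n) : 0 ≤ M i i := by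
  exact hM.diag_nonneg

lemma psd_trace_nonneg' {M : Matrix n n ℂ} (hM : M.PosSemidef) : 0 ≤ M.trace := by
  rw [Matrix.trace]
  exact Finset.sum_nonneg fun i _ => diag_psd_nonneg' hM i

lemma psd_trace_mul_nonneg' {A B : Matrix n n ℂ} (hA : A.PosSemidef) (hB : B.PosSemidef) :
    0 ≤ (A * B).trace := by
  have h1 : A * B = hA.sqrt * (hA.sqrt * B) := by
    rw [← Matrix.mul_assoc, hA.sqrt_mul_self]
  rw [h1, Matrix.trace_mul_comm]
  have h2 : (hA.sqrt * B * hA.sqrt).PosSemidef := by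
    have := hB.mul_mul_conjTranspose_same hA.sqrt
    rwa [hA.posSemidef_sqrt.1] at this
  simpa [Matrix.mul_assoc] using psd_trace_nonneg' h2

lemma trace_mul_vecMulVec' (C : Matrix n n ℂ) (x y : n → ℂ) :
    (C * vecMulVec x y).trace = y ⬝ᵥ (C *ᵥ x) := by
  simp only [Matrix.trace, Matrix.diag, Matrix.mul_apply, Matrix.vecMulVec_apply,
    dotProduct, Matrix.mulVec, Finset.mul_sum]
  exact Finset.sum_congr rfl fun j _ => Finset.sum_congr rfl fun k _ => by ring

lemma vecMulVec_mul_vecMulVec' (x y z w : n → ℂ) :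
    vecMulVec x y * vecMulVec z w = (y ⬝ᵥ z) • vecMulVec x w := by
  ext a b
  simp only [Matrix.mul_apply, Matrix.vecMulVec_apply, Matrix.smul_apply, dotProduct,
    smul_eq_mul, Finset.sum_mul]
  exact Finset.sum_congr rfl fun k _ => by ring

lemma sum_dot_le_trace' {C : Matrix n n ℂ} (hC : C.PosSemidef) (u : n → n → ℂ)
    (horth : ∀ i j, star (u i) ⬝ᵥ u j = if i = j then star (u i) ⬝ᵥ u i else 0)
    (hnorm : ∀ i, star (u i) ⬝ᵥ u i = 0 ∨ star (u i) ⬝ᵥ u i = 1) :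
    ∑ i, star (u i) ⬝ᵥ (C *ᵥ u i) ≤ C.trace := by
  set Q : Matrix n n ℂ := ∑ i, vecMulVec (u i) (star (u i)) with hQ
  have hu0 : ∀ i, star (u i) ⬝ᵥ u i = 0 → u i = 0 := fun i h =>
    dotProduct_star_self_eq_zero.mp h
  have htrCQ : (C * Q).trace = ∑ i, star (u i) ⬝ᵥ (C *ᵥ u i) := by
    rw [hQ, Finset.mul_sum, Matrix.trace_sum]
    exact Finset.sum_congr rfl fun i _ => trace_mul_vecMulVec' C (u i) (star (u i))
  have hQH : Qᴴ = Q := by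
    rw [hQ, Matrix.conjTranspose_sum]
    refine Finset.sum_congr rfl fun i _ => ?_
    ext a b
    simp [Matrix.conjTranspose_apply, Matrix.vecMulVec_apply, mul_comm]
  have hQQ : Q * Q = Q := by
    rw [hQ, Finset.sum_mul_sum]
    refine Finset.sum_congr rfl fun i _ => ?_
    rw [Finset.sum_eq_single i]
    · rw [vecMulVec_mul_vecMulVec']
      rcases hnorm i with h | h
      · rw [h, zero_smul, hu0 i h]
        ext a b
        simp [Matrix.vecMulVec_apply]
      · rw [horth, if_pos rfl, h, one_smul]
    · intro j _ hji
      rw [vecMulVec_mul_vecMulVec', horth, if_neg (Ne.symm hji), zero_smul]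
    · intro h; exact absurd (Finset.mem_univ i) h
  have h1mQ : (1 - Q).PosSemidef := by
    have he : (1 - Q)ᴴ * (1 - Q) = 1 - Q := by
      rw [Matrix.conjTranspose_sub, Matrix.conjTranspose_one, hQH, Matrix.sub_mul,
        Matrix.mul_sub, Matrix.mul_sub, hQQ]
      simp
    rw [← he]
    exact Matrix.posSemidef_conjTranspose_mul_self _
  have hpos : 0 ≤ (C * (1 - Q)).trace := psd_trace_mul_nonneg' hC h1mQ
  rw [Matrix.mul_sub, Matrix.mul_one, Matrix.trace_sub, sub_nonneg, htrCQ] at hpos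
  exact hpos

lemma eq_zero_of_trace_ctms {M : Matrix n n ℂ}
    (h : (Mᴴ * M).trace = 0) : M = 0 := by
  rw [Matrix.trace] at h
  have hdiag : ∀ i, (Mᴴ * M).diag i = star (fun k => M k i) ⬝ᵥ (fun k => M k i) := by
    intro i
    simp [Matrix.diag, Matrix.mul_apply, Matrix.conjTranspose_apply, dotProduct]
  have hnn : ∀ i ∈ Finset.univ, (0:ℂ) ≤ (Mᴴ * M).diag i := by
    intro i _
    rw [hdiag i]
    exact dotProduct_star_self_nonneg _
  have hz := (Finset.sum_eq_zero_iff_of_nonneg hnn).mp h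
  ext j i
  have h1 := hz i (Finset.mem_univ i)
  rw [hdiag i] at h1
  exact congrFun (dotProduct_star_self_eq_zero.mp h1) j

lemma proj_mul_psd_sqrt' {ρ P : Matrix n n ℂ} (hρ : ρ.PosSemidef)
    (hP : P.IsHermitian) (hPidem : P * P = P) (hPρ : P * ρ = ρ) :
    P * hρ.sqrt = hρ.sqrt := by
  set R := hρ.sqrt with hRdef
  have hR2 : R * R = ρ := hρ.sqrt_mul_self
  have hRH : Rᴴ = R := hρ.posSemidef_sqrt.1
  set M := R - P * R with hMdef
  have e : Mᴴ * M = R * R - R * (P * R) := by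
    have h1 : Mᴴ = R - R * P := by
      rw [hMdef, conjTranspose_sub, conjTranspose_mul, hRH, hP.eq]
    rw [h1, hMdef, Matrix.sub_mul, Matrix.mul_sub, Matrix.mul_sub]
    have h2 : R * P * (P * R) = R * (P * R) := by
      rw [Matrix.mul_assoc, ← Matrix.mul_assoc P, hPidem]
    have h3 : R * P * R = R * (P * R) := by rw [Matrix.mul_assoc]
    rw [h2, h3, sub_self, sub_zero]
  have htr : (Mᴴ * M).trace = 0 := by
    rw [e, Matrix.trace_sub]
    have h4 : (R * (P * R)).trace = (R * R).trace := by
      rw [Matrix.trace_mul_comm, Matrix.mul_assoc, hR2, hPρ, ← hR2]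
    rw [h4, sub_self]
  have h5 := eq_zero_of_trace_ctms htr
  rw [hMdef, sub_eq_zero] at h5
  exact h5.symm

lemma unit_star_mul' {A : Matrix n n ℂ} (hA : A.PosSemidef) :
    star (hA.1.eigenvectorUnitary : Matrix n n ℂ) * (hA.1.eigenvectorUnitary : Matrix n n ℂ) = 1 := by
  have h := hA.1.eigenvectorUnitary.2
  rw [Unitary.mem_iff] at h
  exact h.1

lemma unit_mul_star' {A : Matrix n n ℂ} (hA : A.PosSemidef) :
    (hA.1.eigenvectorUnitary : Matrix n n ℂ) * star (hA.1.eigenvectorUnitary : Matrix n n ℂ) = 1 := by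
  have h := hA.1.eigenvectorUnitary.2
  rw [Unitary.mem_iff] at h
  exact h.2

lemma trace_psd_sqrt' {A : Matrix n n ℂ} (hA : A.PosSemidef) :
    hA.sqrt.trace = ∑ i, (Real.sqrt (hA.1.eigenvalues i) : ℂ) := by
  set V := (hA.1.eigenvectorUnitary : Matrix n n ℂ) with hV
  have hsq : hA.sqrt = V * diagonal ((↑) ∘ Real.sqrt ∘ hA.1.eigenvalues) * star V := rfl
  rw [hsq, Matrix.trace_mul_cycle]
  rw [unit_star_mul' hA, Matrix.one_mul, Matrix.trace_diagonal]
  rfl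

lemma eigen_rel' {A : Matrix n n ℂ} (hA : A.PosSemidef) (i : n) :
    A *ᵥ (fun j => (hA.1.eigenvectorUnitary : Matrix n n ℂ) j i)
      = (hA.1.eigenvalues i : ℂ) • (fun j => (hA.1.eigenvectorUnitary : Matrix n n ℂ) j i) := by
  set V := (hA.1.eigenvectorUnitary : Matrix n n ℂ) with hV
  have hAV : A * V = V * diagonal (RCLike.ofReal ∘ hA.1.eigenvalues) := by
    conv_lhs => rw [hA.1.spectral_theorem, Unitary.conjStarAlgAut_apply]
    rw [Matrix.mul_assoc, unit_star_mul' hA, Matrix.mul_one]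
  funext j
  simp only [Matrix.mulVec, dotProduct, Pi.smul_apply, smul_eq_mul]
  rw [show (∑ k, A j k * V k i) = (A * V) j i from rfl, hAV]
  simp [Matrix.mul_apply, Matrix.diagonal_apply, Finset.sum_ite_eq, mul_comm]

lemma col_orth' {A : Matrix n n ℂ} (hA : A.PosSemidef) (i j : n) :
    star (fun k => (hA.1.eigenvectorUnitary : Matrix n n ℂ) k i) ⬝ᵥ
      (fun k => (hA.1.eigenvectorUnitary : Matrix n n ℂ) k j) = if i = j then 1 else 0 := by
  set V := (hA.1.eigenvectorUnitary : Matrix n n ℂ) with hV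
  have h := congrFun (congrFun (unit_star_mul' hA) i) j
  simp only [Matrix.mul_apply, Matrix.star_apply, Matrix.one_apply, ← hV] at h
  simpa [dotProduct, Pi.star_apply] using h

noncomputable def nrm' (x : n → ℂ) : ℝ := ‖(WithLp.equiv 2 (n → ℂ)).symm x‖

lemma nrm_nonneg' (x : n → ℂ) : 0 ≤ nrm' x := norm_nonneg _

lemma dot_self_eq_nrm_sq' (x : n → ℂ) : star x ⬝ᵥ x = ((nrm' x : ℝ) : ℂ)^2 := by
  rw [dotProduct_comm, ← EuclideanSpace.inner_toLp_toLp, inner_self_eq_norm_sq_to_K]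
  rfl

lemma re_dot_le_nrm' (x y : n → ℂ) : (star x ⬝ᵥ y).re ≤ nrm' x * nrm' y := by
  have := re_inner_le_norm (𝕜 := ℂ) ((WithLp.equiv 2 (n → ℂ)).symm x) ((WithLp.equiv 2 (n → ℂ)).symm y)
  have e : (star x ⬝ᵥ y) = inner ℂ ((WithLp.equiv 2 (n → ℂ)).symm x)
      ((WithLp.equiv 2 (n → ℂ)).symm y) := by rw [dotProduct_comm]; rfl
  rw [e]; exact this

lemma nrm_real_smul' (c : ℝ) (x : n → ℂ) : nrm' ((c : ℂ) • x) = |c| * nrm' x := by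
  rw [nrm', nrm']
  rw [show (WithLp.equiv 2 (n → ℂ)).symm ((c:ℂ) • x) = (c:ℂ) • (WithLp.equiv 2 (n → ℂ)).symm x from rfl]
  rw [norm_smul, Complex.norm_real, Real.norm_eq_abs]

lemma dot_mulVec_mulVec' (M : Matrix n n ℂ) (x y : n → ℂ) :
    star (M *ᵥ x) ⬝ᵥ (M *ᵥ y) = star x ⬝ᵥ ((Mᴴ * M) *ᵥ y) := by
  rw [Matrix.star_mulVec, ← Matrix.dotProduct_mulVec, Matrix.mulVec_mulVec]

lemma sum_dot_cols' (M W : Matrix n n ℂ) :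
    ∑ i, star (fun k => W k i) ⬝ᵥ (M *ᵥ fun k => W k i) = (Wᴴ * M * W).trace := by
  simp only [Matrix.trace, Matrix.diag, Matrix.mul_apply, Matrix.mulVec, dotProduct,
    Matrix.conjTranspose_apply, Pi.star_apply, Finset.mul_sum, Finset.sum_mul]
  refine Finset.sum_congr rfl fun i _ => ?_
  rw [Finset.sum_comm]
  refine Finset.sum_congr rfl fun j _ => ?_
  refine Finset.sum_congr rfl fun k _ => by ring

end helpers

/-- If `ρ, σ` are PSD with trace 1 and `P` is a Hermitian idempotent with
`Pρ = ρ`, then `F(ρ,σ)² ≤ tr(Pσ)`. -/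


theorem stmt_4 {n : Type*} [Fintype n] [DecidableEq n] (ρ σ P : Matrix n n ℂ)
    (hρ : ρ.PosSemidef) (hσ : σ.PosSemidef) (hρtr : ρ.trace = 1) (hσtr : σ.trace = 1)
    (hP : P.IsHermitian) (hPidem : P * P = P) (hPρ : P * ρ = ρ) :
    (fidelity ρ σ) ^ 2 ≤ ((P * σ).trace).re := by
  classical
  set R := hρ.sqrt with hRdef
  set S := hσ.sqrt with hSdef
  have hR2 : R * R = ρ := hρ.sqrt_mul_self
  have hS2 : S * S = σ := hσ.sqrt_mul_self
  have hRH : Rᴴ = R := hρ.posSemidef_sqrt.1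
  have hSH : Sᴴ = S := hσ.posSemidef_sqrt.1
  have hPR : P * R = R := proj_mul_psd_sqrt' hρ hP hPidem hPρ
  have hA : (R * σ * R).PosSemidef := by
    have := hσ.mul_mul_conjTranspose_same R
    rwa [hRH] at this
  have hmsρ : msqrt ρ = R := by simp only [msqrt]; rw [dif_pos hρ]; rfl
  have hmsA : msqrt (R * σ * R) = hA.sqrt := by simp only [msqrt]; rw [dif_pos hA]; rfl
  set μ : n → ℝ := hA.1.eigenvalues with hμdef
  set V := (hA.1.eigenvectorUnitary : Matrix n n ℂ) with hVdef
  set v : n → n → ℂ := fun i k => V k i with hvdef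
  have hμnn : ∀ i, 0 ≤ μ i := fun i => hA.eigenvalues_nonneg i
  have hfid : fidelity ρ σ = ∑ i, Real.sqrt (μ i) := by
    rw [fidelity, hmsρ, hmsA, trace_psd_sqrt' hA, Complex.re_sum]
    simp; rfl
  set B := S * R with hBdef
  have hBHB : Bᴴ * B = R * σ * R := by
    rw [hBdef, conjTranspose_mul, hRH, hSH, Matrix.mul_assoc, ← Matrix.mul_assoc S S R, hS2,
      ← Matrix.mul_assoc]
  set w : n → n → ℂ := fun i => B *ᵥ v i with hwdef
  have hvorth : ∀ i j, star (v i) ⬝ᵥ v j = if i = j then 1 else 0 := fun i j => col_orth' hA i j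
  have hveig : ∀ j, (R * σ * R) *ᵥ v j = (μ j : ℂ) • v j := fun j => eigen_rel' hA j
  have hworth : ∀ i j, star (w i) ⬝ᵥ w j = if i = j then (μ i : ℂ) else 0 := by
    intro i j
    rw [hwdef]
    rw [dot_mulVec_mulVec', hBHB, hveig j, dotProduct_smul, hvorth i j]
    by_cases h : i = j
    · subst h; simp
    · simp [h]
  set c : n → ℝ := fun i => Real.sqrt (μ i) with hcdef
  have hcc : ∀ i, c i * c i = μ i := fun i => Real.mul_self_sqrt (hμnn i)
  set u : n → n → ℂ := fun i => (((c i)⁻¹ : ℝ) : ℂ) • w i with hudef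
  have hu_dot : ∀ i j, star (u i) ⬝ᵥ u j
      = (((c i)⁻¹ : ℝ) : ℂ) * ((((c j)⁻¹ : ℝ) : ℂ) * (star (w i) ⬝ᵥ w j)) := by
    intro i j
    rw [hudef]
    simp only [smul_dotProduct, dotProduct_smul, star_smul, smul_eq_mul,
      Complex.star_def, Complex.conj_ofReal]
    ring
  have horth : ∀ i j, star (u i) ⬝ᵥ u j = if i = j then star (u i) ⬝ᵥ u i else 0 := by
    intro i j
    by_cases h : i = j
    · rw [if_pos h, h]
    · rw [if_neg h, hu_dot, hworth, if_neg h, mul_zero, mul_zero]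
  have hnorm : ∀ i, star (u i) ⬝ᵥ u i = 0 ∨ star (u i) ⬝ᵥ u i = 1 := by
    intro i
    rw [hu_dot i i, hworth i i, if_pos rfl]
    by_cases hz : μ i = 0
    · left; rw [hz]; simp
    · right
      have hμpos : 0 < μ i := (hμnn i).lt_of_ne (Ne.symm hz)
      have hcpos : 0 < c i := Real.sqrt_pos.mpr hμpos
      rw [← Complex.ofReal_mul, ← Complex.ofReal_mul]
      rw [show (c i)⁻¹ * ((c i)⁻¹ * μ i) = 1 by
        field_simp
        rw [← hcc i]
        ring]
      simp
  set g : n → ℝ := fun i => nrm' (R *ᵥ v i) with hgdef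
  set f : n → ℝ := fun i => nrm' ((P * S) *ᵥ u i) with hfdef
  have key : ∀ i, Real.sqrt (μ i) ≤ f i * g i := by
    intro i
    rcases eq_or_ne (μ i) 0 with hz | hnz
    · rw [hz, Real.sqrt_zero]; exact mul_nonneg (nrm_nonneg' _) (nrm_nonneg' _)
    · have hμpos : 0 < μ i := (hμnn i).lt_of_ne (Ne.symm hnz)
      have hcpos : 0 < c i := Real.sqrt_pos.mpr hμpos
      have hstep : star ((P * S) *ᵥ w i) ⬝ᵥ (R *ᵥ v i) = (μ i : ℂ) := by
        rw [Matrix.star_mulVec, ← Matrix.dotProduct_mulVec, Matrix.mulVec_mulVec]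
        have hPSR : (P * S)ᴴ * R = B := by
          rw [conjTranspose_mul, hSH, hP.eq, Matrix.mul_assoc, hPR, hBdef]
        rw [hPSR]
        have hwi : B *ᵥ v i = w i := rfl
        rw [hwi, hworth i i, if_pos rfl]
      have hCS : μ i ≤ nrm' ((P * S) *ᵥ w i) * g i := by
        have h1 := re_dot_le_nrm' ((P * S) *ᵥ w i) (R *ᵥ v i)
        rw [hstep] at h1
        simpa using h1
      have hwc : w i = ((c i : ℝ) : ℂ) • u i := by
        rw [hudef, smul_smul, ← Complex.ofReal_mul, mul_inv_cancel₀ (ne_of_gt hcpos),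
          Complex.ofReal_one, one_smul]
      have hnt : nrm' ((P * S) *ᵥ w i) = c i * f i := by
        rw [hwc, Matrix.mulVec_smul, nrm_real_smul', abs_of_pos hcpos]
      rw [hnt] at hCS
      have hfin : c i * Real.sqrt (μ i) ≤ c i * (f i * g i) := by
        calc c i * Real.sqrt (μ i) = μ i := hcc i
          _ ≤ c i * f i * g i := hCS
          _ = c i * (f i * g i) := by ring
      exact le_of_mul_le_mul_left hfin hcpos
  have hsumg : ∑ i, g i ^ 2 = 1 := by
    have hgi : ∀ i, g i ^ 2 = (star (v i) ⬝ᵥ (ρ *ᵥ v i)).re := by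
      intro i
      have h2 := dot_self_eq_nrm_sq' (R *ᵥ v i)
      rw [dot_mulVec_mulVec' R (v i) (v i), hRH, hR2] at h2
      rw [h2, ← Complex.ofReal_pow, Complex.ofReal_re]
    have hsum1 : ∑ i, star (v i) ⬝ᵥ (ρ *ᵥ v i) = ρ.trace := by
      have h3 := sum_dot_cols' ρ V
      have h4 : V * Vᴴ = 1 := by
        rw [← Matrix.star_eq_conjTranspose]
        exact unit_mul_star' hA
      rw [Matrix.trace_mul_cycle, h4, Matrix.one_mul] at h3
      exact h3
    rw [Finset.sum_congr rfl fun i _ => hgi i, ← Complex.re_sum, hsum1, hρtr, Complex.one_re]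
  have hsumf : ∑ i, f i ^ 2 ≤ ((P * σ).trace).re := by
    set C := S * (P * S) with hCdef
    have hPpsd : P.PosSemidef := by
      have h5 : Pᴴ * P = P := by rw [hP.eq, hPidem]
      rw [← h5]
      exact Matrix.posSemidef_conjTranspose_mul_self P
    have hCpsd : C.PosSemidef := by
      have h6 := hPpsd.mul_mul_conjTranspose_same S
      rwa [hSH, Matrix.mul_assoc] at h6
    have hfi : ∀ i, f i ^ 2 = (star (u i) ⬝ᵥ (C *ᵥ u i)).re := by
      intro i
      have h2 := dot_self_eq_nrm_sq' ((P * S) *ᵥ u i)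
      rw [dot_mulVec_mulVec'] at h2
      have h6 : (P * S)ᴴ * (P * S) = C := by
        rw [conjTranspose_mul, hSH, hP.eq, hCdef, Matrix.mul_assoc, ← Matrix.mul_assoc P P S,
          hPidem]
      rw [h6] at h2
      rw [h2, ← Complex.ofReal_pow, Complex.ofReal_re]
    have hle := sum_dot_le_trace' hCpsd u horth hnorm
    have htrC : C.trace = (P * σ).trace := by
      rw [hCdef, Matrix.trace_mul_comm, Matrix.mul_assoc, hS2]
    rw [htrC] at hle
    have h7 := (Complex.le_def.mp hle).1
    rw [Complex.re_sum] at h7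
    calc ∑ i, f i ^ 2 = ∑ i, (star (u i) ⬝ᵥ (C *ᵥ u i)).re :=
          Finset.sum_congr rfl fun i _ => hfi i
      _ ≤ _ := h7
  have hFnn : 0 ≤ fidelity ρ σ := by
    rw [hfid]
    exact Finset.sum_nonneg fun i _ => Real.sqrt_nonneg _
  calc (fidelity ρ σ) ^ 2 ≤ (∑ i, f i * g i) ^ 2 := by
        apply pow_le_pow_left₀ hFnn
        rw [hfid]
        exact Finset.sum_le_sum fun i _ => key i
    _ ≤ (∑ i, f i ^ 2) * (∑ i, g i ^ 2) := Finset.sum_mul_sq_le_sq_mul_sq _ _ _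
    _ = ∑ i, f i ^ 2 := by rw [hsumg, mul_one]
    _ ≤ _ := hsumf
end

section
/- Let X and Y be finite nonempty sets and let f, f' : X → Y with f surjective. Then F(ρ_f, ρ_{f'})² ≤ (1/|X|) · Σ_{(y,y') ∈ Y × Y} |L_f(y) ∩ L_{f'}(y')|² / |L_f(y)|. -/
open Matrix BigOperators
open scoped ComplexOrder

namespace Stmt5Aux

set_option linter.unusedSectionVars false

variable {X Y : Type*} [Fintype X] [Fintype Y] [DecidableEq X] [DecidableEq Y]

/-- fiber size -/
def nn (f : X → Y) (y : Y) : ℕ := (Finset.univ.filter (fun x => f x = y)).card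

lemma nn_pos {f : X → Y} (hf : Function.Surjective f) (y : Y) : 0 < nn f y := by
  obtain ⟨x, hx⟩ := hf y
  exact Finset.card_pos.mpr ⟨x, by simp [hx]⟩

noncomputable def cS (f : X → Y) (y : Y) : ℝ := (Real.sqrt ((Fintype.card X) * nn f y))⁻¹

lemma cS_mul_self {f : X → Y} (y : Y) :
    cS f y * cS f y = (((Fintype.card X : ℝ)) * nn f y)⁻¹ := by
  rw [cS, ← mul_inv]
  rw [Real.mul_self_sqrt (by positivity)]

noncomputable def S (f : X → Y) : Matrix X X ℂ :=
  Matrix.of fun x x' => if f x = f x' then (cS f (f x) : ℂ) else 0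

noncomputable def P (f : X → Y) : Matrix X X ℂ :=
  Matrix.of fun x x' => if f x = f x' then ((nn f (f x) : ℂ))⁻¹ else 0

noncomputable def psi (f : X → Y) (y : Y) : X → ℂ :=
  fun x => if f x = y then (((Real.sqrt (nn f y))⁻¹ : ℝ) : ℂ) else 0

lemma sum_ite_card {R : Type*} [NonAssocSemiring R] (f : X → Y) (y : Y) (c : R) :
    (∑ x : X, if f x = y then c else 0) = (nn f y : R) * c := by
  rw [← Finset.sum_filter, Finset.sum_const, nsmul_eq_mul]
  rfl

lemma S_mul_S [Nonempty X] {f : X → Y} (hf : Function.Surjective f) :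
    S f * S f = hidingState f := by
  ext x x''
  simp only [S, hidingState, Matrix.mul_apply, Matrix.of_apply]
  have hstep : ∀ x' : X,
      (if f x = f x' then (cS f (f x) : ℂ) else 0) *
        (if f x' = f x'' then (cS f (f x') : ℂ) else 0) =
      if f x' = f x then (if f x = f x'' then ((cS f (f x) : ℂ) * cS f (f x)) else 0) else 0 := by
    intro x'
    by_cases h1 : f x = f x'
    · have h1' : f x' = f x := h1.symm
      by_cases h2 : f x = f x''
      · rw [if_pos h1, if_pos (h1'.trans h2), if_pos h1', if_pos h2, ← h1]
      · rw [if_pos h1, if_neg (fun h => h2 (h1.trans h)), if_pos h1', if_neg h2, mul_zero]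
    · rw [if_neg h1, zero_mul, if_neg (fun h : f x' = f x => h1 h.symm)]
  rw [Finset.sum_congr rfl (fun x' _ => hstep x'), sum_ite_card]
  by_cases h : f x = f x''
  · rw [if_pos h, if_pos h]
    have hx : (0:ℝ) < nn f (f x) := by exact_mod_cast nn_pos hf (f x)
    have hN : (0:ℝ) < Fintype.card X := by exact_mod_cast Fintype.card_pos
    have : ((nn f (f x) : ℝ)) * (cS f (f x) * cS f (f x)) = 1 / Fintype.card X := by
      rw [cS_mul_self]
      field_simp
    calc (nn f (f x) : ℂ) * ((cS f (f x) : ℂ) * (cS f (f x) : ℂ))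
        = (((nn f (f x) : ℝ) * (cS f (f x) * cS f (f x)) : ℝ) : ℂ) := by push_cast; ring
      _ = 1 / Fintype.card X := by rw [this]; push_cast; ring
  · simp [h]

noncomputable def Bmat (f : X → Y) : Matrix Y X ℂ :=
  Matrix.of fun y x => if f x = y then ((Real.sqrt (cS f y) : ℝ) : ℂ) else 0

lemma BhB (f : X → Y) : (Bmat f)ᴴ * Bmat f = S f := by
  ext x x'
  simp only [Bmat, S, Matrix.mul_apply, Matrix.conjTranspose_apply, Matrix.of_apply]
  have hstep : ∀ y : Y,
      star (if f x = y then ((Real.sqrt (cS f y) : ℝ) : ℂ) else 0) *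
        (if f x' = y then ((Real.sqrt (cS f y) : ℝ) : ℂ) else 0) =
      if y = f x then (if f x = f x' then
        (((Real.sqrt (cS f (f x)) : ℝ) : ℂ) * ((Real.sqrt (cS f (f x)) : ℝ) : ℂ)) else 0) else 0 := by
    intro y
    by_cases h1 : f x = y
    · subst h1
      rw [if_pos rfl, if_pos rfl, Complex.star_def, Complex.conj_ofReal]
      by_cases h2 : f x = f x'
      · rw [if_pos h2.symm, if_pos h2]
      · rw [if_neg (fun h : f x' = f x => h2 h.symm), if_neg h2, mul_zero]
    · rw [if_neg h1, star_zero, zero_mul, if_neg (fun h : y = f x => h1 h.symm)]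
  rw [Finset.sum_congr rfl (fun y _ => hstep y)]
  simp only [Finset.sum_ite_eq', Finset.mem_univ, if_true]
  by_cases h : f x = f x'
  · rw [if_pos h, if_pos h, ← Complex.ofReal_mul, Real.mul_self_sqrt]
    rw [cS]; positivity
  · rw [if_neg h, if_neg h]

lemma S_posSemidef (f : X → Y) : (S f).PosSemidef := by
  rw [← BhB]; exact Matrix.posSemidef_conjTranspose_mul_self _

noncomputable def Cmat (f : X → Y) : Matrix Y X ℂ :=
  Matrix.of fun y x => if f x = y then (((Real.sqrt (Fintype.card X))⁻¹ : ℝ) : ℂ) else 0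

lemma ChC [Nonempty X] (f : X → Y) : (Cmat f)ᴴ * Cmat f = hidingState f := by
  ext x x'
  simp only [Cmat, hidingState, Matrix.mul_apply, Matrix.conjTranspose_apply, Matrix.of_apply]
  have hstep : ∀ y : Y,
      star (if f x = y then (((Real.sqrt (Fintype.card X))⁻¹ : ℝ) : ℂ) else 0) *
        (if f x' = y then (((Real.sqrt (Fintype.card X))⁻¹ : ℝ) : ℂ) else 0) =
      if y = f x then (if f x = f x' then
        ((((Real.sqrt (Fintype.card X))⁻¹ : ℝ) : ℂ) * (((Real.sqrt (Fintype.card X))⁻¹ : ℝ) : ℂ))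
        else 0) else 0 := by
    intro y
    by_cases h1 : f x = y
    · subst h1
      rw [if_pos rfl, if_pos rfl, Complex.star_def, Complex.conj_ofReal]
      by_cases h2 : f x = f x'
      · rw [if_pos h2.symm, if_pos h2]
      · rw [if_neg (fun h : f x' = f x => h2 h.symm), if_neg h2, mul_zero]
    · rw [if_neg h1, star_zero, zero_mul, if_neg (fun h : y = f x => h1 h.symm)]
  rw [Finset.sum_congr rfl (fun y _ => hstep y)]
  simp only [Finset.sum_ite_eq', Finset.mem_univ, if_true]
  by_cases h : f x = f x'
  · rw [if_pos h, if_pos h, ← Complex.ofReal_mul, ← mul_inv,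
      Real.mul_self_sqrt (by positivity)]
    have hN : (0:ℝ) < Fintype.card X := by exact_mod_cast Fintype.card_pos
    rw [one_div]
    push_cast
    rfl
  · rw [if_neg h, if_neg h]

lemma hidingState_posSemidef [Nonempty X] (f : X → Y) : (hidingState f).PosSemidef := by
  rw [← ChC]; exact Matrix.posSemidef_conjTranspose_mul_self _

open scoped MatrixOrder in
lemma msqrt_of_posSemidef {n : Type*} [Fintype n] [DecidableEq n] {A : Matrix n n ℂ}
    (hA : A.PosSemidef) : msqrt A = CFC.sqrt A := by
  rw [msqrt, dif_pos hA, CFC.sqrt_eq_cfc, cfc_nnreal_eq_real _ A hA.nonneg, hA.1.cfc_eq]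
  simp only [IsHermitian.cfc, Unitary.conjStarAlgAut_apply, Real.sqrt.eq_1]
  rfl

set_option maxHeartbeats 1000000 in
open scoped MatrixOrder in
lemma msqrt_eq {n : Type*} [Fintype n] [DecidableEq n] {A B : Matrix n n ℂ}
    (hB : B.PosSemidef) (hBA : B * B = A) : msqrt A = B := by
  have hA : A.PosSemidef := by
    rw [← hBA]
    nth_rewrite 1 [← hB.isHermitian.eq]
    exact Matrix.posSemidef_conjTranspose_mul_self B
  rw [msqrt_of_posSemidef hA]
  exact CFC.sqrt_unique hBA hB.nonneg


lemma P_herm (f : X → Y) : (P f)ᴴ = P f := by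
  ext x x'
  simp only [P, Matrix.conjTranspose_apply, Matrix.of_apply]
  by_cases h : f x = f x'
  · rw [if_pos h.symm, if_pos h, ← h]
    simp [← Complex.ofReal_natCast, ← Complex.ofReal_inv, Complex.conj_ofReal]
  · rw [if_neg (fun h' : f x' = f x => h h'.symm), if_neg h, star_zero]

lemma S_mul_P {f : X → Y} (hf : Function.Surjective f) : S f * P f = S f := by
  ext x x''
  simp only [S, P, Matrix.mul_apply, Matrix.of_apply]
  have hstep : ∀ x' : X,
      (if f x = f x' then (cS f (f x) : ℂ) else 0) *
        (if f x' = f x'' then ((nn f (f x') : ℂ))⁻¹ else 0) =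
      if f x' = f x then (if f x = f x'' then ((cS f (f x) : ℂ) * ((nn f (f x) : ℂ))⁻¹) else 0)
        else 0 := by
    intro x'
    by_cases h1 : f x = f x'
    · have h1' : f x' = f x := h1.symm
      by_cases h2 : f x = f x''
      · rw [if_pos h1, if_pos (h1'.trans h2), if_pos h1', if_pos h2, ← h1]
      · rw [if_pos h1, if_neg (fun h => h2 (h1.trans h)), if_pos h1', if_neg h2, mul_zero]
    · rw [if_neg h1, zero_mul, if_neg (fun h : f x' = f x => h1 h.symm)]
  rw [Finset.sum_congr rfl (fun x' _ => hstep x'), sum_ite_card]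
  have hn : (nn f (f x) : ℂ) ≠ 0 := by
    exact_mod_cast Nat.cast_ne_zero.mpr (nn_pos hf (f x)).ne'
  by_cases h : f x = f x''
  · rw [if_pos h, if_pos h]
    field_simp
  · simp [h]

lemma P_mul_S {f : X → Y} (hf : Function.Surjective f) : P f * S f = S f := by
  have hS : (S f)ᴴ = S f := by
    ext x x'
    simp only [S, Matrix.conjTranspose_apply, Matrix.of_apply]
    by_cases h : f x = f x'
    · rw [if_pos h.symm, if_pos h, ← h, Complex.star_def, Complex.conj_ofReal]
    · rw [if_neg (fun h' : f x' = f x => h h'.symm), if_neg h, star_zero]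
  calc P f * S f = (P f)ᴴ * (S f)ᴴ := by rw [P_herm, hS]
    _ = ((S f) * (P f))ᴴ := by rw [Matrix.conjTranspose_mul]
    _ = S f := by rw [S_mul_P hf, hS]

lemma S_herm (f : X → Y) : (S f)ᴴ = S f := by
  ext x x'
  simp only [S, Matrix.conjTranspose_apply, Matrix.of_apply]
  by_cases h : f x = f x'
  · rw [if_pos h.symm, if_pos h, ← h, Complex.star_def, Complex.conj_ofReal]
  · rw [if_neg (fun h' : f x' = f x => h h'.symm), if_neg h, star_zero]

lemma star_psi (f : X → Y) (y : Y) : star (psi f y) = psi f y := by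
  funext x
  simp only [psi, Pi.star_apply]
  split_ifs <;>
    simp [Complex.star_def, ← Complex.ofReal_inv, Complex.conj_ofReal]

lemma P_eq_sum {f : X → Y} (hf : Function.Surjective f) :
    P f = ∑ y : Y, Matrix.vecMulVec (psi f y) (star (psi f y)) := by
  ext x x'
  simp only [Matrix.sum_apply, Matrix.vecMulVec_apply, star_psi, P, Matrix.of_apply, psi]
  have hstep : ∀ y : Y,
      (if f x = y then (((Real.sqrt (nn f y))⁻¹ : ℝ) : ℂ) else 0) *
        (if f x' = y then (((Real.sqrt (nn f y))⁻¹ : ℝ) : ℂ) else 0) =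
      if y = f x then (if f x = f x' then
        ((((Real.sqrt (nn f (f x)))⁻¹ : ℝ) : ℂ) * (((Real.sqrt (nn f (f x)))⁻¹ : ℝ) : ℂ)) else 0)
        else 0 := by
    intro y
    by_cases h1 : f x = y
    · subst h1
      rw [if_pos rfl, if_pos rfl]
      by_cases h2 : f x = f x'
      · rw [if_pos h2.symm, if_pos h2]
      · rw [if_neg (fun h : f x' = f x => h2 h.symm), if_neg h2, mul_zero]
    · rw [if_neg h1, zero_mul, if_neg (fun h : y = f x => h1 h.symm)]
  rw [Finset.sum_congr rfl (fun y _ => hstep y)]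
  simp only [Finset.sum_ite_eq', Finset.mem_univ, if_true]
  by_cases h : f x = f x'
  · rw [if_pos h, if_pos h, ← Complex.ofReal_mul, ← mul_inv,
      Real.mul_self_sqrt (by positivity)]
    norm_num
  · rw [if_neg h, if_neg h]

lemma trace_mul_vecMulVec {M : Matrix X X ℂ} (u : X → ℂ) :
    (M * Matrix.vecMulVec u (star u)).trace = star u ⬝ᵥ M *ᵥ u := by
  simp only [Matrix.trace, Matrix.diag_apply, Matrix.mul_apply, Matrix.vecMulVec_apply,
    dotProduct, Matrix.mulVec, Pi.star_apply]
  apply Finset.sum_congr rfl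
  intro x _
  rw [Finset.mul_sum]
  apply Finset.sum_congr rfl
  intro x' _
  ring

lemma S_mulVec [Nonempty X] {f : X → Y} (hf : Function.Surjective f) (y : Y) :
    S f *ᵥ psi f y = (((Real.sqrt (nn f y) / Real.sqrt (Fintype.card X)) : ℝ) : ℂ) • psi f y := by
  funext x
  simp only [Matrix.mulVec, dotProduct, S, psi, Matrix.of_apply, Pi.smul_apply,
    smul_eq_mul]
  have hstep : ∀ x' : X,
      (if f x = f x' then (cS f (f x) : ℂ) else 0) *
        (if f x' = y then (((Real.sqrt (nn f y))⁻¹ : ℝ) : ℂ) else 0) =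
      if f x' = y then (if f x = y then ((cS f y : ℂ) * (((Real.sqrt (nn f y))⁻¹ : ℝ) : ℂ)) else 0)
        else 0 := by
    intro x'
    by_cases h1 : f x' = y
    · by_cases h2 : f x = y
      · rw [if_pos h1, if_pos h1, if_pos h2, if_pos (h2.trans h1.symm), h2]
      · rw [if_neg (fun h : f x = f x' => h2 (h.trans h1)), zero_mul, if_pos h1, if_neg h2]
    · rw [if_neg h1, if_neg h1, mul_zero]
  rw [Finset.sum_congr rfl (fun x' _ => hstep x'), sum_ite_card]
  by_cases h : f x = y
  · rw [if_pos h, if_pos h]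
    have hn : (0:ℝ) < nn f y := by exact_mod_cast nn_pos hf y
    have hN : (0:ℝ) < Fintype.card X := by exact_mod_cast Fintype.card_pos
    have key : (nn f y : ℝ) * (cS f y * (Real.sqrt (nn f y))⁻¹) =
        Real.sqrt (nn f y) / Real.sqrt (Fintype.card X) * (Real.sqrt (nn f y))⁻¹ := by
      have hsn : Real.sqrt (nn f y) * Real.sqrt (nn f y) = (nn f y : ℝ) :=
        Real.mul_self_sqrt hn.le
      have h1 : Real.sqrt (nn f y) ≠ 0 := by positivity
      have h2 : Real.sqrt (Fintype.card X) ≠ 0 := by positivity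
      rw [cS, ← mul_assoc, Real.sqrt_mul hN.le, mul_inv, div_eq_mul_inv]
      nth_rewrite 1 [← hsn]
      field_simp
    calc (nn f y : ℂ) * ((cS f y : ℂ) * (((Real.sqrt (nn f y))⁻¹ : ℝ) : ℂ))
        = (((nn f y : ℝ) * (cS f y * (Real.sqrt (nn f y))⁻¹) : ℝ) : ℂ) := by push_cast; ring
      _ = (((Real.sqrt (nn f y) / Real.sqrt (Fintype.card X) * (Real.sqrt (nn f y))⁻¹ : ℝ)) : ℂ) := by
          rw [key]
      _ = _ := by push_cast; ring
  · simp [h]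



/-- joint fiber size -/
def mm (f f' : X → Y) (y y' : Y) : ℕ :=
  (Finset.univ.filter (fun x => f x = y ∧ f' x = y')).card

lemma sum_ite_pred {R : Type*} [NonAssocSemiring R] (p : X → Prop) [DecidablePred p] (c : R) :
    (∑ x : X, if p x then c else 0) = ((Finset.univ.filter p).card : R) * c := by
  rw [← Finset.sum_filter, Finset.sum_const, nsmul_eq_mul]

lemma sum_fiber (f f' : X → Y) (y : Y) (g : Y → ℂ) :
    (∑ x : X, if f x = y then g (f' x) else 0) = ∑ y' : Y, (mm f f' y y' : ℂ) * g y' := by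
  rw [← Finset.sum_filter, ← Finset.sum_fiberwise' (Finset.univ.filter (fun x => f x = y)) f' g]
  apply Finset.sum_congr rfl
  intro y' _
  rw [Finset.sum_const, Finset.filter_filter, nsmul_eq_mul, mm]

lemma sigma_mulVec (f f' : X → Y) (y : Y) :
    (hidingState f') *ᵥ (psi f y) = fun x => (mm f f' y (f' x) : ℂ) *
      ((((Fintype.card X : ℝ))⁻¹ * (Real.sqrt (nn f y))⁻¹ : ℝ) : ℂ) := by
  funext x
  simp only [Matrix.mulVec, dotProduct, hidingState, psi, Matrix.of_apply]
  have hstep : ∀ x' : X,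
      (if f' x = f' x' then (1 : ℂ) / (Fintype.card X) else 0) *
        (if f x' = y then (((Real.sqrt (nn f y))⁻¹ : ℝ) : ℂ) else 0) =
      if (f x' = y ∧ f' x' = f' x) then
        ((1 : ℂ) / (Fintype.card X) * (((Real.sqrt (nn f y))⁻¹ : ℝ) : ℂ)) else 0 := by
    intro x'
    by_cases h1 : f x' = y <;> by_cases h2 : f' x = f' x'
    · rw [if_pos h2, if_pos h1, if_pos ⟨h1, h2.symm⟩]
    · rw [if_neg h2, zero_mul, if_neg (fun h => h2 h.2.symm)]
    · rw [if_pos h2, if_neg h1, mul_zero, if_neg (fun h => h1 h.1)]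
    · rw [if_neg h2, zero_mul, if_neg (fun h => h1 h.1)]
  rw [Finset.sum_congr rfl (fun x' _ => hstep x'), sum_ite_pred]
  rw [mm]
  push_cast
  ring

lemma quad_sigma [Nonempty X] {f : X → Y} (f' : X → Y) (hf : Function.Surjective f) (y : Y) :
    star (psi f y) ⬝ᵥ ((hidingState f') *ᵥ (psi f y)) =
      (((∑ y' : Y, ((mm f f' y y' : ℝ)) ^ 2) / ((nn f y) * (Fintype.card X)) : ℝ) : ℂ) := by
  have hstar : star (psi f y) = psi f y := by
    funext x
    simp only [psi, Pi.star_apply]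
    split_ifs <;>
      simp [Complex.star_def, ← Complex.ofReal_inv, Complex.conj_ofReal]
  rw [sigma_mulVec, hstar]
  simp only [dotProduct, psi]
  have hstep : ∀ x : X,
      (if f x = y then (((Real.sqrt (nn f y))⁻¹ : ℝ) : ℂ) else 0) *
        ((mm f f' y (f' x) : ℂ) * ((((Fintype.card X : ℝ))⁻¹ * (Real.sqrt (nn f y))⁻¹ : ℝ) : ℂ)) =
      if f x = y then ((fun y' => (mm f f' y y' : ℂ) *
        ((((Real.sqrt (nn f y))⁻¹ * ((Fintype.card X : ℝ))⁻¹ * (Real.sqrt (nn f y))⁻¹ : ℝ)) : ℂ))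
          (f' x)) else 0 := by
    intro x
    by_cases h : f x = y
    · rw [if_pos h, if_pos h]
      push_cast
      ring
    · rw [if_neg h, if_neg h, zero_mul]
  rw [Finset.sum_congr rfl (fun x _ => hstep x),
    sum_fiber f f' y (fun y' => (mm f f' y y' : ℂ) *
      ((((Real.sqrt (nn f y))⁻¹ * ((Fintype.card X : ℝ))⁻¹ * (Real.sqrt (nn f y))⁻¹ : ℝ)) : ℂ))]
  have hn : (0:ℝ) < nn f y := by exact_mod_cast nn_pos hf y
  have hN : (0:ℝ) < Fintype.card X := by exact_mod_cast Fintype.card_pos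
  have hsn : Real.sqrt (nn f y) * Real.sqrt (nn f y) = (nn f y : ℝ) :=
    Real.mul_self_sqrt hn.le
  have key : (Real.sqrt (nn f y))⁻¹ * ((Fintype.card X : ℝ))⁻¹ * (Real.sqrt (nn f y))⁻¹ =
      ((nn f y : ℝ) * (Fintype.card X : ℝ))⁻¹ := by
    rw [mul_inv]
    calc (Real.sqrt (nn f y))⁻¹ * ((Fintype.card X : ℝ))⁻¹ * (Real.sqrt (nn f y))⁻¹
        = ((Real.sqrt (nn f y))⁻¹ * (Real.sqrt (nn f y))⁻¹) * ((Fintype.card X : ℝ))⁻¹ := by ring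
      _ = (Real.sqrt (nn f y) * Real.sqrt (nn f y))⁻¹ * ((Fintype.card X : ℝ))⁻¹ := by
          rw [mul_inv]
      _ = ((nn f y : ℝ))⁻¹ * ((Fintype.card X : ℝ))⁻¹ := by rw [hsn]
  rw [Finset.sum_div]
  push_cast [key]
  apply Finset.sum_congr rfl
  intro y' _
  rw [div_eq_mul_inv]
  push_cast
  ring



lemma cs_step {T : Matrix X X ℂ} (hTh : Tᴴ = T) {u : X → ℂ}
    (hnorm : (∑ x : X, ‖u x‖ ^ 2) = 1) :
    (star u ⬝ᵥ T *ᵥ u).re ≤ Real.sqrt ((star u ⬝ᵥ (T * T) *ᵥ u).re) := by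
  let u' : EuclideanSpace ℂ X := (WithLp.equiv 2 (X → ℂ)).symm u
  let v' : EuclideanSpace ℂ X := (WithLp.equiv 2 (X → ℂ)).symm (T *ᵥ u)
  have hinner : (inner ℂ u' v' : ℂ) = star u ⬝ᵥ T *ᵥ u := by
    simp only [PiLp.inner_apply, RCLike.inner_apply, dotProduct, Pi.star_apply]
    exact Finset.sum_congr rfl (fun _ _ => mul_comm _ _)
  have hnu : ‖u'‖ = 1 := by
    rw [EuclideanSpace.norm_eq]
    have : (∑ x : X, ‖u' x‖ ^ 2) = 1 := hnorm
    rw [this, Real.sqrt_one]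
  have hdot : star (T *ᵥ u) ⬝ᵥ (T *ᵥ u) = star u ⬝ᵥ (T * T) *ᵥ u := by
    rw [star_mulVec, hTh, ← Matrix.dotProduct_mulVec, Matrix.mulVec_mulVec]
  have hvv : ‖v'‖ ^ 2 = (star u ⬝ᵥ (T * T) *ᵥ u).re := by
    rw [← inner_self_eq_norm_sq (𝕜 := ℂ) v']
    have : (inner ℂ v' v' : ℂ) = star (T *ᵥ u) ⬝ᵥ (T *ᵥ u) := by
      simp only [PiLp.inner_apply, RCLike.inner_apply, dotProduct, Pi.star_apply]
      exact Finset.sum_congr rfl (fun _ _ => mul_comm _ _)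
    rw [this, hdot]
    rfl
  calc (star u ⬝ᵥ T *ᵥ u).re = RCLike.re (inner ℂ u' v' : ℂ) := by rw [hinner]; rfl
    _ ≤ ‖u'‖ * ‖v'‖ := re_inner_le_norm u' v'
    _ = ‖v'‖ := by rw [hnu, one_mul]
    _ = Real.sqrt (‖v'‖ ^ 2) := by rw [Real.sqrt_sq (norm_nonneg _)]
    _ = _ := by rw [hvv]


lemma psi_normsum {f : X → Y} (hf : Function.Surjective f) (y : Y) :
    (∑ x : X, ‖psi f y x‖ ^ 2) = 1 := by
  have hn : (0:ℝ) < nn f y := by exact_mod_cast nn_pos hf y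
  have hstep : ∀ x : X, ‖psi f y x‖ ^ 2 =
      if f x = y then ((nn f y : ℝ))⁻¹ else 0 := by
    intro x
    simp only [psi]
    by_cases h : f x = y
    · rw [if_pos h, if_pos h, Complex.norm_real, Real.norm_eq_abs, sq_abs, ← Real.sqrt_inv,
        Real.sq_sqrt (by positivity)]
    · rw [if_neg h, if_neg h, norm_zero]
      norm_num
  rw [Finset.sum_congr rfl (fun x _ => hstep x), sum_ite_card]
  field_simp

lemma quad_A [Nonempty X] {f : X → Y} (f' : X → Y) (hf : Function.Surjective f) (y : Y) :
    star (psi f y) ⬝ᵥ ((S f * hidingState f' * S f) *ᵥ psi f y) =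
      Complex.ofReal (((nn f y : ℝ) / (Fintype.card X)) *
        ((∑ y' : Y, ((mm f f' y y' : ℝ)) ^ 2) / ((nn f y) * (Fintype.card X)))) := by
  have hn : (0:ℝ) < nn f y := by exact_mod_cast nn_pos hf y
  have hN : (0:ℝ) < Fintype.card X := by exact_mod_cast Fintype.card_pos
  set c : ℝ := Real.sqrt (nn f y) / Real.sqrt (Fintype.card X) with hc
  have hsv : S f *ᵥ psi f y = (c : ℂ) • psi f y := S_mulVec hf y
  have hstar_vecMul : star (psi f y) ᵥ* S f = (c : ℂ) • star (psi f y) := by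
    have h1 : star (S f *ᵥ psi f y) = star (psi f y) ᵥ* (S f)ᴴ := Matrix.star_mulVec _ _
    rw [S_herm] at h1
    rw [← h1, hsv, star_smul]
    congr 1
    rw [Complex.star_def, Complex.conj_ofReal]
  have expand : (S f * hidingState f' * S f) *ᵥ psi f y =
      (c : ℂ) • (S f *ᵥ (hidingState f' *ᵥ psi f y)) := by
    rw [← Matrix.mulVec_mulVec, hsv, Matrix.mulVec_smul, ← Matrix.mulVec_mulVec]
  rw [expand, dotProduct_smul, Matrix.dotProduct_mulVec, hstar_vecMul,
    smul_dotProduct]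
  rw [quad_sigma f' hf y]
  have hcc : c * c = (nn f y : ℝ) / Fintype.card X := by
    rw [hc, div_mul_div_comm, Real.mul_self_sqrt hn.le, Real.mul_self_sqrt hN.le]
  rw [smul_eq_mul, smul_eq_mul, ← mul_assoc, ← Complex.ofReal_mul, hcc]
  push_cast
  ring

lemma sum_nn (f : X → Y) : (∑ y : Y, (nn f y : ℝ)) = (Fintype.card X : ℝ) := by
  have := Finset.card_eq_sum_card_fiberwise (f := f) (s := Finset.univ) (t := Finset.univ)
    (fun x _ => Finset.mem_univ (f x))
  rw [← Finset.card_univ]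
  rw [this]
  push_cast
  rfl

end Stmt5Aux

open Stmt5Aux in
open scoped MatrixOrder in
/-- For `f` surjective,
`F(ρ_f,ρ_{f'})² ≤ (1/|X|) Σ_{(y,y')} |L_f(y) ∩ L_{f'}(y')|²/|L_f(y)|`. -/
theorem stmt_5 {X Y : Type*} [Fintype X] [Fintype Y] [DecidableEq X] [DecidableEq Y]
    [Nonempty X] [Nonempty Y] (f f' : X → Y) (hf : Function.Surjective f) :
    (fidelity (hidingState f) (hidingState f')) ^ 2 ≤
      (1 / (Fintype.card X : ℝ)) * ∑ yy : Y × Y,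
        ((Finset.univ.filter (fun x : X => f x = yy.1 ∧ f' x = yy.2)).card : ℝ) ^ 2
          / ((Finset.univ.filter (fun x : X => f x = yy.1)).card : ℝ) := by
  classical
  have hmsq : msqrt (hidingState f) = S f := msqrt_eq (S_posSemidef f) (S_mul_S hf)
  set A := S f * hidingState f' * S f with hA_def
  have hApsd : A.PosSemidef := by
    have := (hidingState_posSemidef f').conjTranspose_mul_mul_same (B := S f)
    rwa [S_herm] at this
  set T := msqrt A with hT_def
  have hmsqA : msqrt A = CFC.sqrt A := msqrt_of_posSemidef hApsd
  have hTpsd : T.PosSemidef := by rw [hT_def, hmsqA]; exact Matrix.nonneg_iff_posSemidef.mp (CFC.sqrt_nonneg A)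
  have hTT : T * T = A := by rw [hT_def, hmsqA]; exact CFC.sqrt_mul_sqrt_self A hApsd.nonneg
  have hfid : fidelity (hidingState f) (hidingState f') = (T.trace).re := by
    rw [fidelity, hmsq]
  have hAP : A * P f = A := by
    rw [hA_def, mul_assoc (S f * hidingState f') (S f) (P f), S_mul_P hf]
  have hPA : P f * A = A := by
    rw [hA_def, ← mul_assoc, ← mul_assoc, P_mul_S hf]
  have hTP : T * P f = T := by
    have h1 : (T * (1 - P f))ᴴ * (T * (1 - P f)) = 0 := by
      rw [Matrix.conjTranspose_mul, Matrix.conjTranspose_sub, Matrix.conjTranspose_one,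
        P_herm, hTpsd.isHermitian.eq]
      calc (1 - P f) * T * (T * (1 - P f))
          = (1 - P f) * ((T * T) * (1 - P f)) := by rw [mul_assoc, ← mul_assoc T T]
        _ = ((1 - P f) * A) * (1 - P f) := by rw [hTT, ← mul_assoc]
        _ = 0 := by rw [Matrix.sub_mul, Matrix.one_mul, hPA, sub_self, Matrix.zero_mul]
    have h2 : T * (1 - P f) = 0 := Matrix.conjTranspose_mul_self_eq_zero.mp h1
    rw [Matrix.mul_sub, Matrix.mul_one, sub_eq_zero] at h2
    exact h2.symm
  have htr : T.trace = ∑ y : Y, star (psi f y) ⬝ᵥ T *ᵥ psi f y := by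
    conv_lhs => rw [← hTP]
    rw [P_eq_sum hf, Finset.mul_sum, Matrix.trace_sum]
    exact Finset.sum_congr rfl (fun y _ => trace_mul_vecMulVec _)
  set N := (Fintype.card X : ℝ) with hNdef
  have hN : (0:ℝ) < N := by rw [hNdef]; exact_mod_cast Fintype.card_pos
  set p : Y → ℝ := fun y => (nn f y : ℝ) / N with hp_def
  set q : Y → ℝ := fun y => (∑ y' : Y, ((mm f f' y y' : ℝ)) ^ 2) / ((nn f y) * N) with hq_def
  have hp0 : ∀ y, 0 ≤ p y := fun y => by rw [hp_def]; positivity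
  have hq0 : ∀ y, 0 ≤ q y := fun y => by
    rw [hq_def]
    have : (0:ℝ) ≤ ∑ y' : Y, ((mm f f' y y' : ℝ)) ^ 2 :=
      Finset.sum_nonneg (fun _ _ => sq_nonneg _)
    positivity
  set t : Y → ℝ := fun y => (star (psi f y) ⬝ᵥ T *ᵥ psi f y).re with ht_def
  have hbound : ∀ y : Y, t y ≤ Real.sqrt (p y) * Real.sqrt (q y) := by
    intro y
    have h := cs_step hTpsd.isHermitian.eq (psi_normsum hf y)
    rw [hTT, hA_def, quad_A f' hf y, Complex.ofReal_re] at h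
    have heq : (nn f y : ℝ) / (Fintype.card X) *
        ((∑ y' : Y, ((mm f f' y y' : ℝ)) ^ 2) / ((nn f y) * (Fintype.card X))) = p y * q y := by
      simp only [hp_def, hq_def, hNdef]
    rw [heq] at h
    simp only [ht_def]
    exact h.trans (le_of_eq (Real.sqrt_mul (hp0 y) _))
  have ht0 : ∀ y : Y, 0 ≤ t y := fun y => hTpsd.re_dotProduct_nonneg (psi f y)
  have htre : (T.trace).re = ∑ y : Y, t y := by
    rw [htr, Complex.re_sum]
  have hsum_p : (∑ y : Y, p y) = 1 := by
    simp only [hp_def, hNdef]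
    rw [← Finset.sum_div, sum_nn,
      div_self (by exact_mod_cast Fintype.card_pos.ne' : (Fintype.card X : ℝ) ≠ 0)]
  have hrhs : (∑ y : Y, q y) =
      (1 / N) * ∑ yy : Y × Y,
        ((Finset.univ.filter (fun x : X => f x = yy.1 ∧ f' x = yy.2)).card : ℝ) ^ 2
          / ((Finset.univ.filter (fun x : X => f x = yy.1)).card : ℝ) := by
    rw [Fintype.sum_prod_type, Finset.mul_sum]
    apply Finset.sum_congr rfl
    intro y _
    simp only [hq_def]
    rw [Finset.sum_div, Finset.mul_sum]
    apply Finset.sum_congr rfl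
    intro y' _
    rw [mul_comm (1/N), mul_one_div, div_div]
    rfl
  rw [hfid, htre]
  calc (∑ y : Y, t y) ^ 2
      ≤ (∑ y : Y, Real.sqrt (p y) * Real.sqrt (q y)) ^ 2 := by
        apply pow_le_pow_left₀ (Finset.sum_nonneg (fun y _ => ht0 y))
        exact Finset.sum_le_sum (fun y _ => hbound y)
    _ ≤ (∑ y : Y, Real.sqrt (p y) ^ 2) * (∑ y : Y, Real.sqrt (q y) ^ 2) :=
        Finset.sum_mul_sq_le_sq_mul_sq _ _ _
    _ = (∑ y : Y, p y) * (∑ y : Y, q y) := by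
        rw [Finset.sum_congr rfl (fun y _ => Real.sq_sqrt (hp0 y)),
          Finset.sum_congr rfl (fun y _ => Real.sq_sqrt (hq0 y))]
    _ = ∑ y : Y, q y := by rw [hsum_p, one_mul]
    _ = _ := hrhs
end
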